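/- Let k be a field and V, W k-vector spaces. A linear functional f : V ⊗ W → k lies in the image of the canonical map V* ⊗ W* → (V ⊗ W)* if and only if the linear map W → V* sending w to the functional v ↦ f(v ⊗ w) has finite-dimensional range, i.e. the span in V* of the translations {v ↦ f(v ⊗ w) : w ∈ W} is finite-dimensional. -/

import Mathlib

open TensorProduct

/-- A functional `f` on `V ⊗ W` lies in the image of the canonical map
`V* ⊗ W* → (V ⊗ W)*` iff the linear map `W → V*`, `w ↦ (v ↦ f (v ⊗ w))`, has
finite-dimensional range. -/
theorem statement11 (k V W : Type) [Field k]
    [AddCommGroup V] [Module k V] [AddCommGroup W] [Module k W]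
    (f : Module.Dual k (V ⊗[k] W)) :
    f ∈ LinearMap.range (TensorProduct.dualDistrib k V W) ↔
      FiniteDimensional k ↥(LinearMap.range ((TensorProduct.lcurry (RingHom.id k) V W k f).flip)) := by
  constructor
  · rintro ⟨x, rfl⟩
    obtain ⟨s, rfl⟩ := TensorProduct.exists_finset x
    have hle : LinearMap.range
        ((TensorProduct.lcurry (RingHom.id k) V W k ((TensorProduct.dualDistrib k V W)
          (∑ i ∈ s, i.1 ⊗ₜ[k] i.2))).flip) ≤
        Submodule.span k (Prod.fst '' (s : Set (Module.Dual k V × Module.Dual k W))) := by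
      rintro _ ⟨w, rfl⟩
      have : (TensorProduct.lcurry (RingHom.id k) V W k ((TensorProduct.dualDistrib k V W)
          (∑ i ∈ s, i.1 ⊗ₜ[k] i.2))).flip w = ∑ i ∈ s, (i.2 w) • i.1 := by
        ext v
        simp [TensorProduct.dualDistrib_apply, mul_comm]
      rw [this]
      exact Submodule.sum_mem _ fun i hi => Submodule.smul_mem _ _
        (Submodule.subset_span ⟨i, hi, rfl⟩)
    have : FiniteDimensional k
        (Submodule.span k (Prod.fst '' (s : Set (Module.Dual k V × Module.Dual k W)))) :=
      FiniteDimensional.span_of_finite k ((s.finite_toSet).image _)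
    exact Submodule.finiteDimensional_of_le hle
  · intro hfd
    set g := (TensorProduct.lcurry (RingHom.id k) V W k f).flip with hg
    haveI := Module.Free.of_divisionRing k (LinearMap.range g)
    let b := Module.finBasis k (LinearMap.range g)
    refine ⟨∑ i, ((b i : Module.Dual k V) ⊗ₜ[k]
      ((b.coord i) ∘ₗ g.rangeRestrict)), ?_⟩
    apply TensorProduct.ext'
    intro v w
    have hgw : g w = ∑ i, (b.coord i (g.rangeRestrict w)) • (b i : Module.Dual k V) := by
      have := b.sum_repr (g.rangeRestrict w)
      have h2 : ((g.rangeRestrict w : LinearMap.range g) : Module.Dual k V) = g w := rfl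
      calc g w = ((∑ i, b.repr (g.rangeRestrict w) i • b i : LinearMap.range g) :
          Module.Dual k V) := by rw [this]; rfl
        _ = ∑ i, (b.coord i (g.rangeRestrict w)) • (b i : Module.Dual k V) := by
          push_cast [Submodule.coe_sum]
          rfl
    have hfvw : f (v ⊗ₜ[k] w) = g w v := rfl
    calc ((TensorProduct.dualDistrib k V W)
        (∑ i, (b i : Module.Dual k V) ⊗ₜ[k] ((b.coord i) ∘ₗ g.rangeRestrict))) (v ⊗ₜ[k] w)
        = ∑ i, (b i : Module.Dual k V) v * (b.coord i (g.rangeRestrict w)) := by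
          rw [map_sum, LinearMap.sum_apply]
          refine Finset.sum_congr rfl fun i _ => ?_
          rw [TensorProduct.dualDistrib_apply]
          rfl
      _ = (∑ i, (b.coord i (g.rangeRestrict w)) • (b i : Module.Dual k V)) v := by
          rw [LinearMap.sum_apply]
          exact Finset.sum_congr rfl fun i _ => (mul_comm _ _).trans rfl
      _ = f (v ⊗ₜ[k] w) := by rw [← hgw, hfvw]
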